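/- arXiv:1506.06232 — 2 statements merged into one kernel-verified Lean document; each statement's English description precedes it below -/
import Mathlib

section
/- For every x ≥ 0 one has ∫₀^∞ (2Φ(x/√(2z)) − 1) e^{−z} dz = 1 − e^{−x}. Equivalently, if X is a standard normal random variable and W₁ is a standard exponential random variable independent of X, then √(2W₁)·|X| has the standard exponential distribution (the distributional identity W₁ ≐ √(2W₁)|X|). -/
open MeasureTheory Real Set

/-- Standard normal distribution function. -/
noncomputable def stdNormalCDF (x : ℝ) : ℝ :=
  (Real.sqrt (2 * Real.pi))⁻¹ * ∫ t in Set.Iio x, Real.exp (-t ^ 2 / 2)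

lemma gauss_integrable : Integrable (fun t : ℝ => Real.exp (-t ^ 2 / 2)) := by
  have h := integrable_exp_neg_mul_sq (b := (1/2 : ℝ)) (by norm_num)
  convert h using 2 with t
  ring_nf

lemma gauss_total : ∫ t : ℝ, Real.exp (-t ^ 2 / 2) = Real.sqrt (2 * Real.pi) := by
  have h := integral_gaussian (1/2 : ℝ)
  have h2 : ∀ t : ℝ, Real.exp (-(1/2) * t ^ 2) = Real.exp (-t ^ 2 / 2) := fun t => by ring_nf
  simp_rw [h2] at h
  rw [h]; congr 1; field_simp

lemma gauss_Iio_zero : ∫ t in Set.Iio (0:ℝ), Real.exp (-t ^ 2 / 2) = Real.sqrt (2 * Real.pi) / 2 := by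
  have hsymm : ∫ t in Set.Iio (0:ℝ), Real.exp (-t ^ 2 / 2)
      = ∫ t in Set.Ioi (0:ℝ), Real.exp (-t ^ 2 / 2) := by
    have h := integral_comp_neg_Ioi (c := (0:ℝ)) (f := fun t => Real.exp (-t ^ 2 / 2))
    simp only [neg_zero] at h
    rw [MeasureTheory.integral_Iic_eq_integral_Iio] at h
    rw [← h]
    congr 1; ext t; ring_nf
  have hadd : (∫ t in Set.Iio (0:ℝ), Real.exp (-t ^ 2 / 2))
      + ∫ t in Set.Ici (0:ℝ), Real.exp (-t ^ 2 / 2) = Real.sqrt (2 * Real.pi) := by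
    rw [intervalIntegral.integral_Iio_add_Ici gauss_integrable.integrableOn
      gauss_integrable.integrableOn, gauss_total]
  rw [MeasureTheory.integral_Ici_eq_integral_Ioi, ← hsymm] at hadd
  linarith

lemma gauss_Ioi_zero : ∫ t in Set.Ioi (0:ℝ), Real.exp (-t ^ 2 / 2) = Real.sqrt (2 * Real.pi) / 2 := by
  have h := integral_comp_neg_Ioi (c := (0:ℝ)) (f := fun t => Real.exp (-t ^ 2 / 2))
  simp only [neg_zero] at h
  rw [MeasureTheory.integral_Iic_eq_integral_Iio] at h
  rw [← gauss_Iio_zero, ← h]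
  congr 1; ext t; ring_nf

lemma sqrt_two_pi_pos : 0 < Real.sqrt (2 * Real.pi) :=
  Real.sqrt_pos.2 (by positivity)

lemma cdf_formula (u : ℝ) (hu : 0 < u) :
    2 * stdNormalCDF u - 1
      = 2 * (Real.sqrt (2 * Real.pi))⁻¹ * ∫ t in Set.Ioo 0 u, Real.exp (-t ^ 2 / 2) := by
  have hdisj : Disjoint (Set.Iio (0:ℝ)) (Set.Ico 0 u) := by
    rw [Set.disjoint_left]; intro t ht hti; exact absurd hti.1 (not_le.2 ht)
  have hsplit : ∫ t in Set.Iio u, Real.exp (-t ^ 2 / 2)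
      = (∫ t in Set.Iio (0:ℝ), Real.exp (-t ^ 2 / 2))
        + ∫ t in Set.Ioo 0 u, Real.exp (-t ^ 2 / 2) := by
    rw [← integral_Ico_eq_integral_Ioo,
      ← setIntegral_union hdisj measurableSet_Ico
        gauss_integrable.integrableOn gauss_integrable.integrableOn,
      Set.Iio_union_Ico_eq_Iio hu.le]
  rw [stdNormalCDF, hsplit, gauss_Iio_zero]
  have h2 : (Real.sqrt (2 * Real.pi))⁻¹ * Real.sqrt (2 * Real.pi) = 1 :=
    inv_mul_cancel₀ (ne_of_gt sqrt_two_pi_pos)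
  set c := (Real.sqrt (2 * Real.pi))⁻¹
  set A := ∫ t in Set.Ioo 0 u, Real.exp (-t ^ 2 / 2)
  have : c * Real.sqrt (2 * Real.pi) = 1 := h2
  nlinarith [this]

lemma exp_Ioo (a : ℝ) (ha : 0 ≤ a) :
    ∫ z in Set.Ioo (0:ℝ) a, Real.exp (-z) = 1 - Real.exp (-a) := by
  rw [← integral_Ioc_eq_integral_Ioo, ← intervalIntegral.integral_of_le ha]
  rw [intervalIntegral.integral_comp_neg (fun w => Real.exp w), integral_exp]
  simp

lemma glasser (x : ℝ) (hx : 0 < x) :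
    ∫ t in Set.Ioi (0:ℝ), Real.exp (-t ^ 2 / 2 - x ^ 2 / (2 * t ^ 2))
      = Real.sqrt (2 * Real.pi) / 2 * Real.exp (-x) := by
  set h : ℝ → ℝ := fun t => Real.exp (-t ^ 2 / 2 - x ^ 2 / (2 * t ^ 2)) with hh
  have hs : MeasurableSet (Set.Ioi (0:ℝ)) := measurableSet_Ioi
  -- change of variables t ↦ x / t
  have hderiv1 : ∀ t ∈ Set.Ioi (0:ℝ),
      HasDerivWithinAt (fun t => x / t) (-(x / t ^ 2)) (Set.Ioi (0:ℝ)) t := by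
    intro t ht
    have := (hasDerivAt_inv (ne_of_gt (mem_Ioi.1 ht))).const_mul x
    simp only [div_eq_mul_inv]
    convert this.hasDerivWithinAt using 1
    · rfl
    · rfl
    · ring
  have hinj1 : Set.InjOn (fun t => x / t) (Set.Ioi (0:ℝ)) := by
    intro a ha b hb hab
    have ha0 : a ≠ 0 := ne_of_gt (mem_Ioi.1 ha)
    have hb0 : b ≠ 0 := ne_of_gt (mem_Ioi.1 hb)
    simp only [div_eq_div_iff ha0 hb0] at hab
    have := mul_left_cancel₀ (ne_of_gt hx) hab
    linarith [this]
  have himg1 : (fun t => x / t) '' Set.Ioi (0:ℝ) = Set.Ioi (0:ℝ) := by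
    ext y
    constructor
    · rintro ⟨t, ht, rfl⟩; exact div_pos hx (mem_Ioi.1 ht)
    · intro hy; exact ⟨x / y, div_pos hx (mem_Ioi.1 hy), by field_simp⟩
  have e1 : ∫ t in Set.Ioi (0:ℝ), h t = ∫ t in Set.Ioi (0:ℝ), x / t ^ 2 * h t := by
    have e := integral_image_eq_integral_abs_deriv_smul hs hderiv1 hinj1 h
    rw [himg1] at e
    rw [e]
    refine setIntegral_congr_fun hs (fun t ht => ?_)
    have ht0 : (0:ℝ) < t := mem_Ioi.1 ht
    have : h (x / t) = h t := by
      simp only [hh]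
      congr 1
      rw [div_pow]
      field_simp
      ring
    rw [this, abs_neg, abs_of_nonneg (by positivity : (0:ℝ) ≤ x / t ^ 2), smul_eq_mul]
  have hInt_h : IntegrableOn h (Set.Ioi (0:ℝ)) := by
    refine Integrable.mono gauss_integrable.restrict ?_ ?_
    · apply Measurable.aestronglyMeasurable
      fun_prop
    · filter_upwards [ae_restrict_mem hs] with t ht
      have ht0 : (0:ℝ) < t := mem_Ioi.1 ht
      rw [Real.norm_eq_abs, Real.norm_eq_abs, abs_of_nonneg (Real.exp_nonneg _),
        abs_of_nonneg (Real.exp_nonneg _)]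
      apply Real.exp_le_exp.2
      have : 0 ≤ x ^ 2 / (2 * t ^ 2) := by positivity
      linarith
  have hInt_xh : IntegrableOn (fun t => x / t ^ 2 * h t) (Set.Ioi (0:ℝ)) := by
    have e := (integrableOn_image_iff_integrableOn_abs_deriv_smul hs hderiv1 hinj1 h)
    rw [himg1] at e
    refine (e.1 hInt_h).congr_fun (fun t ht => ?_) hs
    have ht0 : (0:ℝ) < t := mem_Ioi.1 ht
    have hht : h (x / t) = h t := by
      simp only [hh]
      congr 1
      rw [div_pow]
      field_simp
      ring
    beta_reduce
    rw [hht, abs_neg, abs_of_nonneg (by positivity : (0:ℝ) ≤ x / t ^ 2), smul_eq_mul]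
  -- change of variables t ↦ t - x / t
  have hderiv2 : ∀ t ∈ Set.Ioi (0:ℝ),
      HasDerivWithinAt (fun t => t - x / t) (1 + x / t ^ 2) (Set.Ioi (0:ℝ)) t := by
    intro t ht
    have ht0 : (0:ℝ) < t := mem_Ioi.1 ht
    have := (hasDerivAt_id t).sub ((hasDerivAt_inv (ne_of_gt ht0)).const_mul x)
    simp only [div_eq_mul_inv]
    convert this.hasDerivWithinAt using 1
    · rfl
    · rfl
    · rfl
    · ring
  have hmono2 : StrictMonoOn (fun t => t - x / t) (Set.Ioi (0:ℝ)) := by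
    intro a ha b hb hab
    have h1 : x / b < x / a := div_lt_div_of_pos_left hx (mem_Ioi.1 ha) hab
    simp only
    linarith
  have hinj2 : Set.InjOn (fun t => t - x / t) (Set.Ioi (0:ℝ)) := hmono2.injOn
  have himg2 : (fun t => t - x / t) '' Set.Ioi (0:ℝ) = Set.univ := by
    ext y
    simp only [Set.mem_univ, iff_true]
    set s := Real.sqrt (y ^ 2 + 4 * x) with hsdef
    have hs2 : s ^ 2 = y ^ 2 + 4 * x := Real.sq_sqrt (by positivity)
    have hs0 : 0 ≤ s := Real.sqrt_nonneg _
    have hgt : -y < s := by nlinarith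
    have hpos : (0:ℝ) < y + s := by linarith
    refine ⟨(y + s) / 2, mem_Ioi.2 (by linarith), ?_⟩
    simp only
    rw [div_sub_div _ _ (by norm_num : (2:ℝ) ≠ 0) (by positivity : (y + s) / 2 ≠ 0),
      div_eq_iff (by positivity : (2:ℝ) * ((y + s) / 2) ≠ 0)]
    ring_nf
    nlinarith [hs2]
  have e2 := integral_image_eq_integral_abs_deriv_smul hs hderiv2 hinj2
    (fun u => Real.exp (-u ^ 2 / 2))
  rw [himg2, Measure.restrict_univ, gauss_total] at e2
  have e3 : ∫ t in Set.Ioi (0:ℝ), |1 + x / t ^ 2| • Real.exp (-(t - x / t) ^ 2 / 2)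
      = Real.exp x * ((∫ t in Set.Ioi (0:ℝ), h t)
          + ∫ t in Set.Ioi (0:ℝ), x / t ^ 2 * h t) := by
    rw [← integral_add hInt_h hInt_xh, ← MeasureTheory.integral_const_mul]
    refine setIntegral_congr_fun hs (fun t ht => ?_)
    have ht0 : (0:ℝ) < t := mem_Ioi.1 ht
    have hexp : Real.exp (-(t - x / t) ^ 2 / 2) = Real.exp x * h t := by
      rw [hh, ← Real.exp_add]
      congr 1
      field_simp
      ring
    rw [hexp, abs_of_nonneg (by positivity), smul_eq_mul]
    ring
  rw [e3, ← e1] at e2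
  have hex : Real.exp (-x) = (Real.exp x)⁻¹ := Real.exp_neg x
  have hexpos : (0:ℝ) < Real.exp x := Real.exp_pos x
  rw [hex, eq_mul_inv_iff_mul_eq₀ (ne_of_gt hexpos)]
  linarith [e2]

lemma glasser_integrable (x : ℝ) :
    IntegrableOn (fun t : ℝ => Real.exp (-t ^ 2 / 2 - x ^ 2 / (2 * t ^ 2))) (Set.Ioi (0:ℝ)) := by
  refine Integrable.mono gauss_integrable.restrict ?_ ?_
  · apply Measurable.aestronglyMeasurable
    fun_prop
  · filter_upwards [ae_restrict_mem measurableSet_Ioi] with t ht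
    have ht0 : (0:ℝ) < t := mem_Ioi.1 ht
    rw [Real.norm_eq_abs, Real.norm_eq_abs, abs_of_nonneg (Real.exp_nonneg _),
      abs_of_nonneg (Real.exp_nonneg _)]
    apply Real.exp_le_exp.2
    have : 0 ≤ x ^ 2 / (2 * t ^ 2) := by positivity
    linarith

set_option maxHeartbeats 1600000 in
/-- Lemma 1: for every `x ≥ 0`,
`∫₀^∞ (2 Φ(x/√(2z)) − 1) e^{−z} dz = 1 − e^{−x}`, i.e. if `X` is standard
normal and `W₁` standard exponential, independent, then `√(2W₁)·|X|` is
standard exponential. -/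
theorem weibull_halfnormal_exponential_mixture (x : ℝ) (hx : 0 ≤ x) :
    ∫ z in Set.Ioi (0 : ℝ),
        (2 * stdNormalCDF (x / Real.sqrt (2 * z)) - 1) * Real.exp (-z)
      = 1 - Real.exp (-x) := by
  rcases eq_or_lt_of_le hx with h0 | hx
  · -- x = 0
    rw [← h0]
    have hcdf0 : stdNormalCDF 0 = 1/2 := by
      rw [stdNormalCDF, gauss_Iio_zero]
      field_simp
    simp [zero_div, hcdf0]
  -- x > 0
  set g : ℝ → ℝ := fun t => Real.exp (-t ^ 2 / 2) with hg
  set c : ℝ := (Real.sqrt (2 * Real.pi))⁻¹ with hc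
  set S : Set (ℝ × ℝ) := {p | 0 < p.1 ∧ 0 < p.2 ∧ 2 * p.1 * p.2 ^ 2 < x ^ 2} with hS
  have hSm : MeasurableSet S := by
    rw [hS, Set.setOf_and, Set.setOf_and]
    exact (measurableSet_lt measurable_const measurable_fst).inter
      ((measurableSet_lt measurable_const measurable_snd).inter
        (measurableSet_lt ((measurable_fst.const_mul 2).mul (measurable_snd.pow_const 2))
          measurable_const))
  set F : ℝ × ℝ → ℝ := S.indicator (fun p => Real.exp (-p.1) * Real.exp (-p.2 ^ 2 / 2)) with hF
  have hexpInt : IntegrableOn (fun z : ℝ => Real.exp (-z)) (Set.Ioi (0:ℝ)) := by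
    have := exp_neg_integrableOn_Ioi (0:ℝ) (b := 1) (by norm_num)
    simpa using this
  have hFint : Integrable F := by
    set H : ℝ × ℝ → ℝ := fun p =>
      (Set.Ioi (0:ℝ)).indicator (fun z => Real.exp (-z)) p.1 * Real.exp (-p.2 ^ 2 / 2) with hH
    have hHint : Integrable H :=
      ((integrable_indicator_iff measurableSet_Ioi).2 hexpInt).mul_prod gauss_integrable
    refine hHint.mono ?_ (Filter.Eventually.of_forall fun p => ?_)
    · exact (((continuous_fst.neg.rexp).mul (by fun_prop)).aestronglyMeasurable).indicator hSm
    · by_cases hp : p ∈ S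
      · have hHp : H p = Real.exp (-p.1) * Real.exp (-p.2 ^ 2 / 2) := by
          simp only [hH]
          rw [Set.indicator_of_mem (mem_Ioi.2 hp.1)]
        rw [hF, Set.indicator_of_mem hp, hHp]
      · rw [hF, Set.indicator_of_notMem hp]
        simp only [norm_zero, norm_nonneg]
  have hswap : ∫ z : ℝ, ∫ t : ℝ, F (z, t) = ∫ t : ℝ, ∫ z : ℝ, F (z, t) := by
    apply integral_integral_swap
    have : Function.uncurry (fun z t : ℝ => F (z, t)) = F := by
      funext p; simp [Function.uncurry]
    rw [this]; exact hFint
  -- inner integral in t, for fixed z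
  have hAz : ∀ z : ℝ, (∫ t : ℝ, F (z, t))
      = (Set.Ioi (0:ℝ)).indicator
          (fun z => (∫ t in Set.Ioo 0 (x / Real.sqrt (2 * z)), g t) * Real.exp (-z)) z := by
    intro z
    by_cases hz : 0 < z
    · rw [Set.indicator_of_mem (mem_Ioi.2 hz)]
      set u : ℝ := x / Real.sqrt (2 * z) with hu
      have hsq : 0 < Real.sqrt (2 * z) := Real.sqrt_pos.2 (by linarith)
      have hu0 : 0 < u := div_pos hx hsq
      have hu2 : 2 * z * u ^ 2 = x ^ 2 := by
        rw [hu, div_pow, Real.sq_sqrt (by linarith : (0:ℝ) ≤ 2 * z)]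
        field_simp
      have hset : ∀ t : ℝ, F (z, t)
          = (Set.Ioo 0 u).indicator (fun t => Real.exp (-z) * Real.exp (-t ^ 2 / 2)) t := by
        intro t
        by_cases htin : t ∈ Set.Ioo 0 u
        · have hmem : (z, t) ∈ S := by
            refine ⟨hz, htin.1, ?_⟩
            have h1 : t ^ 2 < u ^ 2 := by nlinarith [htin.1, htin.2]
            nlinarith
          rw [hF, Set.indicator_of_mem hmem, Set.indicator_of_mem htin]
        · have hmem : (z, t) ∉ S := by
            rintro ⟨-, ht2, ht3⟩
            apply htin
            refine ⟨ht2, ?_⟩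
            by_contra hle
            push_neg at hle
            have : u ^ 2 ≤ t ^ 2 := by nlinarith
            nlinarith
          rw [hF, Set.indicator_of_notMem hmem, Set.indicator_of_notMem htin]
      rw [integral_congr_ae (Filter.Eventually.of_forall hset),
        integral_indicator measurableSet_Ioo, MeasureTheory.integral_const_mul]
      rw [mul_comm]
    · rw [Set.indicator_of_notMem (by simpa using hz)]
      have : ∀ t : ℝ, F (z, t) = 0 := fun t =>
        Set.indicator_of_notMem (fun hmem => hz hmem.1) _
      simp [this]
  -- inner integral in z, for fixed t
  have hBt : ∀ t : ℝ, (∫ z : ℝ, F (z, t))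
      = (Set.Ioi (0:ℝ)).indicator
          (fun t => Real.exp (-t ^ 2 / 2) * (1 - Real.exp (-(x ^ 2 / (2 * t ^ 2))))) t := by
    intro t
    by_cases ht : 0 < t
    · rw [Set.indicator_of_mem (mem_Ioi.2 ht)]
      set a : ℝ := x ^ 2 / (2 * t ^ 2) with ha
      have ha0 : 0 < a := by positivity
      have hset : ∀ z : ℝ, F (z, t)
          = (Set.Ioo 0 a).indicator (fun z => Real.exp (-z) * Real.exp (-t ^ 2 / 2)) z := by
        intro z
        have hiff : (z, t) ∈ S ↔ z ∈ Set.Ioo 0 a := by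
          constructor
          · rintro ⟨h1, -, h3⟩
            refine ⟨h1, ?_⟩
            rw [ha, lt_div_iff₀ (by positivity)]
            nlinarith
          · rintro ⟨h1, h2⟩
            refine ⟨h1, ht, ?_⟩
            rw [ha, lt_div_iff₀ (by positivity)] at h2
            nlinarith
        by_cases hzin : z ∈ Set.Ioo 0 a
        · rw [hF, Set.indicator_of_mem (hiff.2 hzin), Set.indicator_of_mem hzin]
        · rw [hF, Set.indicator_of_notMem (fun hmem => hzin (hiff.1 hmem)),
            Set.indicator_of_notMem hzin]
      rw [integral_congr_ae (Filter.Eventually.of_forall hset),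
        integral_indicator measurableSet_Ioo, MeasureTheory.integral_mul_const, exp_Ioo a ha0.le]
      rw [mul_comm]
    · rw [Set.indicator_of_notMem (by simpa using ht)]
      have : ∀ z : ℝ, F (z, t) = 0 := fun z =>
        Set.indicator_of_notMem (fun hmem => ht hmem.2.1) _
      simp [this]
  -- identify the two sides
  have key : ∫ z in Set.Ioi (0:ℝ), (∫ t in Set.Ioo 0 (x / Real.sqrt (2 * z)), g t) * Real.exp (-z)
      = ∫ t in Set.Ioi (0:ℝ), Real.exp (-t ^ 2 / 2) * (1 - Real.exp (-(x ^ 2 / (2 * t ^ 2)))) := by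
    rw [← integral_indicator measurableSet_Ioi, ← integral_indicator measurableSet_Ioi]
    calc _ = ∫ z : ℝ, ∫ t : ℝ, F (z, t) := by
            exact (integral_congr_ae (Filter.Eventually.of_forall hAz)).symm
      _ = ∫ t : ℝ, ∫ z : ℝ, F (z, t) := hswap
      _ = _ := integral_congr_ae (Filter.Eventually.of_forall hBt)
  -- compute the right-hand side of key
  have hglass : ∫ t in Set.Ioi (0:ℝ),
      Real.exp (-t ^ 2 / 2) * (1 - Real.exp (-(x ^ 2 / (2 * t ^ 2))))
      = Real.sqrt (2 * Real.pi) / 2 - Real.sqrt (2 * Real.pi) / 2 * Real.exp (-x) := by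
    have heq : ∀ t ∈ Set.Ioi (0:ℝ),
        Real.exp (-t ^ 2 / 2) * (1 - Real.exp (-(x ^ 2 / (2 * t ^ 2))))
          = Real.exp (-t ^ 2 / 2) - Real.exp (-t ^ 2 / 2 - x ^ 2 / (2 * t ^ 2)) := by
      intro t ht
      rw [mul_sub, mul_one, sub_eq_add_neg (-t ^ 2 / 2), Real.exp_add]
    rw [setIntegral_congr_fun measurableSet_Ioi heq,
      integral_sub gauss_integrable.integrableOn (glasser_integrable x),
      gauss_Ioi_zero, glasser x hx]
  -- compute the left-hand side via cdf_formula
  have hLHS : ∫ z in Set.Ioi (0:ℝ),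
      (2 * stdNormalCDF (x / Real.sqrt (2 * z)) - 1) * Real.exp (-z)
      = 2 * c * ∫ z in Set.Ioi (0:ℝ),
          (∫ t in Set.Ioo 0 (x / Real.sqrt (2 * z)), g t) * Real.exp (-z) := by
    rw [← MeasureTheory.integral_const_mul]
    refine setIntegral_congr_fun measurableSet_Ioi (fun z hz => ?_)
    have hz0 : (0:ℝ) < z := mem_Ioi.1 hz
    have hsq : 0 < Real.sqrt (2 * z) := Real.sqrt_pos.2 (by linarith)
    have hu0 : 0 < x / Real.sqrt (2 * z) := div_pos hx hsq
    rw [cdf_formula _ hu0]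
    ring
  rw [hLHS, key, hglass]
  have hcs : c * Real.sqrt (2 * Real.pi) = 1 := inv_mul_cancel₀ (ne_of_gt sqrt_two_pi_pos)
  linear_combination (1 - Real.exp (-x)) * hcs
end

section
/- Let α ∈ (0,2) and let μ be a probability measure on ℝ whose characteristic function satisfies ∫_ℝ e^{i t x} dμ(x) = e^{−|t|^α} for all t ∈ ℝ (μ is the symmetric strictly stable law with exponent α). Then for every β with 0 < β < α, ∫_ℝ |x|^β dμ(x) = (2^β/√π) · Γ((β+1)/2) · Γ(1 − β/α) / Γ(1 − β/2). -/
open MeasureTheory Real Set Filter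
open scoped ENNReal NNReal

namespace SymmStableAux

/-! ### Elementary inequalities -/

lemma one_sub_cos_nonneg (x : ℝ) : 0 ≤ 1 - Real.cos x := by
  linarith [Real.cos_le_one x]

lemma one_sub_cos_le_two (x : ℝ) : 1 - Real.cos x ≤ 2 := by
  linarith [Real.neg_one_le_cos x]

lemma one_sub_cos_le_sq (x : ℝ) : 1 - Real.cos x ≤ x ^ 2 / 2 := by
  linarith [Real.one_sub_sq_div_two_le_cos (x := x)]

lemma one_sub_exp_neg_nonneg {x : ℝ} (hx : 0 ≤ x) : 0 ≤ 1 - Real.exp (-x) := by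
  have : Real.exp (-x) ≤ 1 := Real.exp_le_one_iff.mpr (by linarith)
  linarith

lemma one_sub_exp_neg_le {x : ℝ} : 1 - Real.exp (-x) ≤ x := by
  have := Real.add_one_le_exp (-x)
  linarith

lemma one_sub_exp_neg_le_one {x : ℝ} : 1 - Real.exp (-x) ≤ 1 := by
  have := Real.exp_nonneg (-x)
  linarith

lemma integrableOn_Ioc_rpow {r : ℝ} (hr : -1 < r) :
    IntegrableOn (fun t : ℝ => t ^ r) (Ioc (0:ℝ) 1) := by
  have := intervalIntegral.intervalIntegrable_rpow' (a := 0) (b := 1) hr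
  rwa [intervalIntegrable_iff_integrableOn_Ioc_of_le zero_le_one] at this

/-! ### Integrability of the kernel `(1 - cos (c t)) t^(-1-β)` -/

lemma integrableOn_kernel {β : ℝ} (hβ0 : 0 < β) (hβ2 : β < 2) (c : ℝ) :
    IntegrableOn (fun t : ℝ => (1 - Real.cos (c * t)) * t ^ (-1 - β)) (Ioi (0:ℝ)) := by
  have hmeas : Measurable (fun t : ℝ => (1 - Real.cos (c * t)) * t ^ (-1 - β)) := by fun_prop
  rw [← Ioc_union_Ioi_eq_Ioi (zero_le_one : (0:ℝ) ≤ 1), integrableOn_union]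
  constructor
  · refine Integrable.mono' ((integrableOn_Ioc_rpow (r := 1 - β) (by linarith)).const_mul
      (c ^ 2 / 2)) hmeas.aestronglyMeasurable ?_
    filter_upwards [ae_restrict_mem measurableSet_Ioc] with t ht
    have ht0 : 0 < t := ht.1
    have h1 : 0 ≤ 1 - Real.cos (c * t) := one_sub_cos_nonneg _
    have h2 : (0:ℝ) ≤ t ^ (-1 - β) := Real.rpow_nonneg ht0.le _
    rw [Real.norm_eq_abs, abs_of_nonneg (mul_nonneg h1 h2)]
    have hb : 1 - Real.cos (c * t) ≤ c ^ 2 / 2 * t ^ (2:ℝ) := by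
      have := one_sub_cos_le_sq (c * t)
      calc 1 - Real.cos (c * t) ≤ (c * t) ^ 2 / 2 := this
        _ = c ^ 2 / 2 * t ^ (2:ℝ) := by rw [Real.rpow_two]; ring
    calc (1 - Real.cos (c * t)) * t ^ (-1 - β)
        ≤ (c ^ 2 / 2 * t ^ (2:ℝ)) * t ^ (-1 - β) := by
          exact mul_le_mul_of_nonneg_right hb h2
      _ = c ^ 2 / 2 * t ^ (1 - β) := by
          rw [mul_assoc, ← Real.rpow_add ht0]; ring_nf
  · refine Integrable.mono' ((integrableOn_Ioi_rpow_of_lt (a := -1 - β)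
      (by linarith) (one_pos)).const_mul 2) hmeas.aestronglyMeasurable ?_
    filter_upwards [ae_restrict_mem measurableSet_Ioi] with t ht
    have ht0 : (0:ℝ) < t := lt_trans one_pos ht
    have h1 : 0 ≤ 1 - Real.cos (c * t) := one_sub_cos_nonneg _
    have h2 : (0:ℝ) ≤ t ^ (-1 - β) := Real.rpow_nonneg ht0.le _
    rw [Real.norm_eq_abs, abs_of_nonneg (mul_nonneg h1 h2)]
    exact mul_le_mul_of_nonneg_right (one_sub_cos_le_two _) h2

/-! ### Scaling identity -/

lemma integral_kernel_scale {β : ℝ} (hβ0 : 0 < β) (x : ℝ) :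
    ∫ t in Ioi (0:ℝ), (1 - Real.cos (x * t)) * t ^ (-1 - β)
      = |x| ^ β * ∫ t in Ioi (0:ℝ), (1 - Real.cos t) * t ^ (-1 - β) := by
  rcases eq_or_ne x 0 with rfl | hx
  · simp [Real.zero_rpow hβ0.ne']
  · have h0 : 0 < |x| := abs_pos.mpr hx
    set g : ℝ → ℝ := fun s => (1 - Real.cos s) * s ^ (-1 - β) with hg
    have key : ∀ t ∈ Ioi (0:ℝ),
        (1 - Real.cos (x * t)) * t ^ (-1 - β) = |x| ^ (1 + β) * g (|x| * t) := by
      intro t ht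
      have ht0 : (0:ℝ) < t := ht
      have hcos : Real.cos (|x| * t) = Real.cos (x * t) := by
        rw [show |x| * t = |x * t| by rw [abs_mul, abs_of_pos ht0], Real.cos_abs]
      have hr : (|x| * t) ^ (-1 - β) = |x| ^ (-1 - β) * t ^ (-1 - β) :=
        Real.mul_rpow h0.le ht0.le
      rw [hg]
      simp only
      rw [hcos, hr]
      have : |x| ^ (1 + β) * |x| ^ (-1 - β) = 1 := by
        rw [← Real.rpow_add h0]; norm_num
      calc (1 - Real.cos (x * t)) * t ^ (-1 - β)
          = (|x| ^ (1 + β) * |x| ^ (-1 - β)) * ((1 - Real.cos (x * t)) * t ^ (-1 - β)) := by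
            rw [this, one_mul]
        _ = |x| ^ (1 + β) * ((1 - Real.cos (x * t)) * (|x| ^ (-1 - β) * t ^ (-1 - β))) := by
            ring
    rw [setIntegral_congr_fun measurableSet_Ioi key, integral_const_mul,
      integral_comp_mul_left_Ioi g 0 h0, mul_zero, smul_eq_mul, ← mul_assoc]
    congr 1
    rw [← Real.rpow_neg_one |x|, ← Real.rpow_add h0]
    norm_num

/-! ### The key Fubini identity -/

lemma integrable_cos_mul (P : Measure ℝ) [IsProbabilityMeasure P] (t : ℝ) :
    Integrable (fun x => Real.cos (x * t)) P := by
  refine Integrable.mono' (integrable_const 1)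
    (Measurable.aestronglyMeasurable (by fun_prop)) ?_
  exact ae_of_all _ fun x => by rw [Real.norm_eq_abs]; exact Real.abs_cos_le_one _

lemma lintegral_moment {β : ℝ} (hβ0 : 0 < β) (hβ2 : β < 2)
    (P : Measure ℝ) [IsProbabilityMeasure P] (g : ℝ → ℝ)
    (hg : ∀ t : ℝ, 0 < t → ∫ x, Real.cos (x * t) ∂P = g t) :
    (∫⁻ x, ENNReal.ofReal (|x| ^ β) ∂P)
        * ENNReal.ofReal (∫ t in Ioi (0:ℝ), (1 - Real.cos t) * t ^ (-1 - β))
      = ∫⁻ t in Ioi (0:ℝ), ENNReal.ofReal ((1 - g t) * t ^ (-1 - β)) := by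
  have step1 : (∫⁻ x, ENNReal.ofReal (|x| ^ β) ∂P)
        * ENNReal.ofReal (∫ t in Ioi (0:ℝ), (1 - Real.cos t) * t ^ (-1 - β))
      = ∫⁻ x, ∫⁻ t in Ioi (0:ℝ),
          ENNReal.ofReal ((1 - Real.cos (x * t)) * t ^ (-1 - β)) ∂volume ∂P := by
    rw [← lintegral_mul_const _ (by fun_prop)]
    refine lintegral_congr fun x => ?_
    rw [← ENNReal.ofReal_mul (Real.rpow_nonneg (abs_nonneg x) β),
      ← integral_kernel_scale hβ0 x,
      ofReal_integral_eq_lintegral_ofReal (integrableOn_kernel hβ0 hβ2 x) ?_]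
    filter_upwards [ae_restrict_mem measurableSet_Ioi] with t ht
    exact mul_nonneg (one_sub_cos_nonneg _) (Real.rpow_nonneg (le_of_lt ht) _)
  rw [step1, lintegral_lintegral_swap (by fun_prop)]
  refine setLIntegral_congr_fun measurableSet_Ioi (fun t ht => ?_)
  have ht0 : (0:ℝ) < t := ht
  have hnn : (0:ℝ) ≤ t ^ (-1 - β) := Real.rpow_nonneg ht0.le _
  have hint : Integrable (fun x => 1 - Real.cos (x * t)) P :=
    (integrable_const 1).sub (integrable_cos_mul P t)
  calc ∫⁻ x, ENNReal.ofReal ((1 - Real.cos (x * t)) * t ^ (-1 - β)) ∂P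
      = ∫⁻ x, ENNReal.ofReal (1 - Real.cos (x * t)) * ENNReal.ofReal (t ^ (-1 - β)) ∂P := by
        refine lintegral_congr fun x => ?_
        rw [← ENNReal.ofReal_mul (one_sub_cos_nonneg _)]
    _ = (∫⁻ x, ENNReal.ofReal (1 - Real.cos (x * t)) ∂P) * ENNReal.ofReal (t ^ (-1 - β)) := by
        rw [lintegral_mul_const _ (by fun_prop)]
    _ = ENNReal.ofReal (∫ x, (1 - Real.cos (x * t)) ∂P) * ENNReal.ofReal (t ^ (-1 - β)) := by
        rw [ofReal_integral_eq_lintegral_ofReal hint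
          (ae_of_all _ fun x => one_sub_cos_nonneg _)]
    _ = ENNReal.ofReal ((1 - g t) * t ^ (-1 - β)) := by
        rw [integral_sub (integrable_const 1) (integrable_cos_mul P t), integral_const,
          probReal_univ, smul_eq_mul, mul_one, hg t ht0,
          ← ENNReal.ofReal_mul]
        have : g t ≤ 1 := by
          rw [← hg t ht0]
          calc ∫ x, Real.cos (x * t) ∂P ≤ ∫ _x, (1:ℝ) ∂P := by
                refine integral_mono (integrable_cos_mul P t) (integrable_const 1)
                  fun x => Real.cos_le_one _
            _ = 1 := by simp
        linarith

/-! ### The one-dimensional integral `∫ (1-e^{-t^γ}) t^{-1-β}` -/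

lemma integrableOn_rpow_mul_exp_neg_rpow' {p q : ℝ} (hp : 0 < p) (hq : -1 < q) :
    IntegrableOn (fun t : ℝ => t ^ q * Real.exp (-t ^ p)) (Ioi (0:ℝ)) := by
  have hs : (0:ℝ) < (q + 1) / p := div_pos (by linarith) hp
  have h := (integrableOn_Ioi_comp_rpow_iff'
      (fun y : ℝ => Real.exp (-y) * y ^ ((q + 1) / p - 1)) hp.ne').mpr
      (Real.GammaIntegral_convergent hs)
  refine h.congr_fun (fun x hx => ?_) measurableSet_Ioi
  have hx0 : (0:ℝ) < x := hx
  simp only [smul_eq_mul]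
  rw [← Real.rpow_mul hx0.le, mul_sub, mul_div_cancel₀ _ hp.ne', mul_one]
  rw [mul_comm (Real.exp (-x ^ p)), ← mul_assoc, ← Real.rpow_add hx0]
  ring_nf

lemma integrableOn_one_sub_exp {β γ : ℝ} (hβ0 : 0 < β) (hγ : 0 < γ) (hβγ : β < γ) :
    IntegrableOn (fun t : ℝ => (1 - Real.exp (-t ^ γ)) * t ^ (-1 - β)) (Ioi (0:ℝ)) := by
  have hmeas : Measurable (fun t : ℝ => (1 - Real.exp (-t ^ γ)) * t ^ (-1 - β)) := by fun_prop
  rw [← Ioc_union_Ioi_eq_Ioi (zero_le_one : (0:ℝ) ≤ 1), integrableOn_union]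
  constructor
  · refine Integrable.mono' (integrableOn_Ioc_rpow (r := γ - 1 - β) (by linarith))
      hmeas.aestronglyMeasurable ?_
    filter_upwards [ae_restrict_mem measurableSet_Ioc] with t ht
    have ht0 : 0 < t := ht.1
    have hge : (0:ℝ) ≤ t ^ γ := Real.rpow_nonneg ht0.le _
    have h1 : 0 ≤ 1 - Real.exp (-t ^ γ) := one_sub_exp_neg_nonneg hge
    have h2 : (0:ℝ) ≤ t ^ (-1 - β) := Real.rpow_nonneg ht0.le _
    rw [Real.norm_eq_abs, abs_of_nonneg (mul_nonneg h1 h2)]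
    calc (1 - Real.exp (-t ^ γ)) * t ^ (-1 - β) ≤ t ^ γ * t ^ (-1 - β) :=
          mul_le_mul_of_nonneg_right one_sub_exp_neg_le h2
      _ = t ^ (γ - 1 - β) := by rw [← Real.rpow_add ht0]; ring_nf
  · refine Integrable.mono' (integrableOn_Ioi_rpow_of_lt (a := -1 - β) (by linarith) one_pos)
      hmeas.aestronglyMeasurable ?_
    filter_upwards [ae_restrict_mem measurableSet_Ioi] with t ht
    have ht0 : (0:ℝ) < t := lt_trans one_pos ht
    have hge : (0:ℝ) ≤ t ^ γ := Real.rpow_nonneg ht0.le _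
    have h1 : 0 ≤ 1 - Real.exp (-t ^ γ) := one_sub_exp_neg_nonneg hge
    have h2 : (0:ℝ) ≤ t ^ (-1 - β) := Real.rpow_nonneg ht0.le _
    rw [Real.norm_eq_abs, abs_of_nonneg (mul_nonneg h1 h2)]
    nth_rewrite 2 [← one_mul (t ^ (-1 - β))]
    exact mul_le_mul_of_nonneg_right one_sub_exp_neg_le_one h2

lemma integral_one_sub_exp {β γ : ℝ} (hβ0 : 0 < β) (hγ : 0 < γ) (hβγ : β < γ) :
    ∫ t in Ioi (0:ℝ), (1 - Real.exp (-t ^ γ)) * t ^ (-1 - β)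
      = Real.Gamma (1 - β / γ) / β := by
  set f : ℝ → ℝ := fun t => (Real.exp (-t ^ γ) - 1) * t ^ (-β) / β with hf
  set f' : ℝ → ℝ := fun t => (1 - Real.exp (-t ^ γ)) * t ^ (-1 - β)
    - (γ / β) * (t ^ (γ - 1 - β) * Real.exp (-t ^ γ)) with hf'
  have hf0 : f 0 = 0 := by
    simp [hf, Real.zero_rpow hγ.ne', Real.exp_zero]
  have hderiv : ∀ t ∈ Ioi (0:ℝ), HasDerivAt f (f' t) t := by
    intro t ht
    have ht0 : (0:ℝ) < t := ht
    have h1 : HasDerivAt (fun s : ℝ => s ^ γ) (γ * t ^ (γ - 1)) t :=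
      Real.hasDerivAt_rpow_const (Or.inl ht0.ne')
    have h2 : HasDerivAt (fun s : ℝ => Real.exp (-s ^ γ))
        (Real.exp (-t ^ γ) * -(γ * t ^ (γ - 1))) t :=
      (Real.hasDerivAt_exp _).comp t h1.neg
    have h3 : HasDerivAt (fun s : ℝ => s ^ (-β)) (-β * t ^ (-β - 1)) t :=
      Real.hasDerivAt_rpow_const (Or.inl ht0.ne')
    have h4 := ((h2.sub_const 1).mul h3).div_const β
    refine HasDerivAt.congr_deriv h4 ?_
    have e1 : t ^ (γ - 1) * t ^ (-β) = t ^ (γ - 1 - β) := by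
      rw [← Real.rpow_add ht0]; ring_nf
    have e2 : t ^ (-β - 1) = t ^ (-1 - β) := by ring_nf
    rw [hf']
    simp only
    rw [← e1, e2]
    field_simp
    ring
  have hcont : ContinuousWithinAt f (Ici (0:ℝ)) 0 := by
    rw [ContinuousWithinAt, hf0]
    have hlim : Tendsto (fun t : ℝ => t ^ (γ - β) / β) (nhdsWithin 0 (Ici 0)) (nhds 0) := by
      have h := (Real.continuousAt_rpow_const 0 (γ - β) (Or.inr (by linarith))).tendsto
      rw [Real.zero_rpow (ne_of_gt (show (0:ℝ) < γ - β by linarith))] at h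
      have := h.div_const β
      rw [zero_div] at this
      exact this.mono_left nhdsWithin_le_nhds
    refine squeeze_zero_norm' ?_ hlim
    filter_upwards [self_mem_nhdsWithin] with t (ht : (0:ℝ) ≤ t)
    rcases eq_or_lt_of_le ht with rfl | ht0
    · rw [hf0]
      simp [Real.zero_rpow (ne_of_gt (show (0:ℝ) < γ - β by linarith))]
    · have hge : (0:ℝ) ≤ t ^ γ := Real.rpow_nonneg ht0.le _
      have h2 : (0:ℝ) ≤ t ^ (-β) := Real.rpow_nonneg ht0.le _
      rw [hf]
      simp only [Real.norm_eq_abs, abs_div, abs_of_pos hβ0, abs_mul,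
        abs_of_nonneg h2, abs_of_nonpos (by linarith [one_sub_exp_neg_nonneg hge] :
          Real.exp (-t ^ γ) - 1 ≤ 0)]
      rw [neg_sub]
      gcongr
      calc (1 - Real.exp (-t ^ γ)) * t ^ (-β) ≤ t ^ γ * t ^ (-β) :=
            mul_le_mul_of_nonneg_right one_sub_exp_neg_le h2
        _ = t ^ (γ - β) := by rw [← Real.rpow_add ht0]; ring_nf
  have htop : Tendsto f atTop (nhds 0) := by
    have h5 : Tendsto (fun t : ℝ => t ^ γ) atTop atTop := tendsto_rpow_atTop hγ
    have h6 : Tendsto (fun t : ℝ => Real.exp (-t ^ γ) - 1) atTop (nhds (0 - 1)) :=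
      ((Real.tendsto_exp_neg_atTop_nhds_zero.comp h5)).sub_const 1
    have h7 : Tendsto (fun t : ℝ => t ^ (-β)) atTop (nhds 0) := tendsto_rpow_neg_atTop hβ0
    have := (h6.mul h7).div_const β
    simpa using this
  have hA := integrableOn_one_sub_exp hβ0 hγ hβγ
  have hB := (integrableOn_rpow_mul_exp_neg_rpow' hγ (by linarith : (-1:ℝ) < γ - 1 - β))
  have hf'int : IntegrableOn f' (Ioi (0:ℝ)) := hA.sub (hB.const_mul (γ / β))
  have key : ∫ t in Ioi (0:ℝ), f' t = 0 - f 0 :=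
    integral_Ioi_of_hasDerivAt_of_tendsto hcont hderiv hf'int htop
  rw [hf0, sub_zero] at key
  have split : ∫ t in Ioi (0:ℝ), f' t
      = (∫ t in Ioi (0:ℝ), (1 - Real.exp (-t ^ γ)) * t ^ (-1 - β))
        - (γ / β) * ∫ t in Ioi (0:ℝ), t ^ (γ - 1 - β) * Real.exp (-t ^ γ) := by
    rw [hf']
    rw [integral_sub hA (hB.const_mul (γ / β)), integral_const_mul]
  rw [split] at key
  have hval : ∫ t in Ioi (0:ℝ), t ^ (γ - 1 - β) * Real.exp (-t ^ γ)
      = (1 / γ) * Real.Gamma (1 - β / γ) := by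
    rw [integral_rpow_mul_exp_neg_rpow hγ (by linarith)]
    have harg : (γ - 1 - β + 1) / γ = 1 - β / γ := by field_simp; ring
    rw [harg]
  rw [hval] at key
  have hfin : (γ / β) * ((1 / γ) * Real.Gamma (1 - β / γ)) = Real.Gamma (1 - β / γ) / β := by
    field_simp
  linarith [key, hfin]

/-! ### The auxiliary Gaussian measure -/

noncomputable def gaussDen : ℝ → ℝ := fun x => (2 * Real.sqrt π)⁻¹ * Real.exp (-(1/4 : ℝ) * x ^ 2)

lemma gaussDen_nonneg (x : ℝ) : 0 ≤ gaussDen x := by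
  unfold gaussDen
  positivity

lemma gaussDen_meas : Measurable gaussDen := by unfold gaussDen; fun_prop

lemma sqrt_four_pi : Real.sqrt (π / (1/4)) = 2 * Real.sqrt π := by
  rw [show π / (1/4 : ℝ) = 4 * π by ring, show (4:ℝ) = 2^2 by norm_num,
    Real.sqrt_mul (by positivity), Real.sqrt_sq (by norm_num : (0:ℝ) ≤ 2)]

lemma two_sqrt_pi_pos : (0:ℝ) < 2 * Real.sqrt π := by
  have := Real.pi_pos
  positivity

lemma gaussDen_integrable : Integrable gaussDen :=
  (integrable_exp_neg_mul_sq (by norm_num : (0:ℝ) < 1/4)).const_mul _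

lemma gaussDen_total : ∫ x, gaussDen x = 1 := by
  unfold gaussDen
  rw [integral_const_mul, integral_gaussian, sqrt_four_pi,
    inv_mul_cancel₀ two_sqrt_pi_pos.ne']

noncomputable def gaussM : Measure ℝ :=
  volume.withDensity (fun x => ENNReal.ofReal (gaussDen x))

instance : IsProbabilityMeasure gaussM := by
  constructor
  rw [gaussM, withDensity_apply _ MeasurableSet.univ, Measure.restrict_univ,
    ← ofReal_integral_eq_lintegral_ofReal gaussDen_integrable
      (ae_of_all _ gaussDen_nonneg), gaussDen_total, ENNReal.ofReal_one]

lemma gaussM_integral (g : ℝ → ℝ) :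
    ∫ x, g x ∂gaussM = ∫ x, gaussDen x * g x := by
  have : gaussM = volume.withDensity (fun x => ((gaussDen x).toNNReal : ℝ≥0∞)) := rfl
  rw [this, integral_withDensity_eq_integral_smul gaussDen_meas.real_toNNReal g]
  refine integral_congr_ae (ae_of_all _ fun x => ?_)
  show (gaussDen x).toNNReal • g x = gaussDen x * g x
  rw [NNReal.smul_def, smul_eq_mul, Real.coe_toNNReal _ (gaussDen_nonneg x)]

lemma integral_cos_gauss (t : ℝ) :
    ∫ x : ℝ, Real.cos (t * x) * Real.exp (-(1/4 : ℝ) * x ^ 2)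
      = 2 * Real.sqrt π * Real.exp (-t ^ 2) := by
  have hb : (0:ℝ) < ((1/4 : ℂ)).re := by norm_num
  have key := fourierIntegral_gaussian (b := (1/4 : ℂ)) hb (t := (t : ℂ))
  have hint : Integrable (fun x : ℝ => Complex.exp (Complex.I * t * x)
      * Complex.exp (-(1/4 : ℂ) * x ^ 2)) := by
    refine (integrable_cexp_quadratic hb (Complex.I * t) 0).congr
      (ae_of_all _ fun x => ?_)
    show Complex.exp _ = Complex.exp _ * Complex.exp _
    rw [← Complex.exp_add]
    ring_nf
  have hre := congrArg Complex.re key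
  have hre2 := integral_re hint
  simp only [RCLike.re_to_complex] at hre2
  rw [← hre2] at hre
  have hlhs : ∀ x : ℝ, ((Complex.exp (Complex.I * t * x)
      * Complex.exp (-(1/4 : ℂ) * x ^ 2)).re : ℝ)
      = Real.cos (t * x) * Real.exp (-(1/4 : ℝ) * x ^ 2) := by
    intro x
    have h1 : Complex.I * t * x = ((t * x : ℝ) : ℂ) * Complex.I := by push_cast; ring
    have h2 : (-(1/4 : ℂ) * (x:ℂ) ^ 2) = ((-(1/4 : ℝ) * x ^ 2 : ℝ) : ℂ) := by push_cast; ring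
    rw [h1, h2, ← Complex.ofReal_exp, Complex.mul_re, Complex.exp_ofReal_mul_I_re,
      Complex.ofReal_re, Complex.ofReal_im, mul_zero, sub_zero]
  have hrhs : ((↑π / (1/4 : ℂ)) ^ (1/2 : ℂ) * Complex.exp (-(t:ℂ) ^ 2 / (4 * (1/4 : ℂ)))).re
      = 2 * Real.sqrt π * Real.exp (-t ^ 2) := by
    have h3 : (↑π / (1/4 : ℂ)) = ((4 * π : ℝ) : ℂ) := by push_cast; ring
    have h4 : -(t:ℂ) ^ 2 / (4 * (1/4 : ℂ)) = ((-t ^ 2 : ℝ) : ℂ) := by push_cast; ring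
    have h5 : ((4 * π : ℝ) : ℂ) ^ (1/2 : ℂ) = (((4 * π : ℝ) ^ (1/2 : ℝ) : ℝ) : ℂ) := by
      rw [Complex.ofReal_cpow (by positivity : (0:ℝ) ≤ 4 * π)]
      norm_num
    have h6 : (4 * π : ℝ) ^ (1/2 : ℝ) = 2 * Real.sqrt π := by
      rw [← Real.sqrt_eq_rpow, show (4 : ℝ) * π = π / (1/4) by ring, sqrt_four_pi]
    rw [h3, h4, h5, h6, ← Complex.ofReal_exp, ← Complex.ofReal_mul]
    exact Complex.ofReal_re _
  rw [hrhs] at hre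
  rw [← hre]
  exact integral_congr_ae (ae_of_all _ fun x => (hlhs x).symm)

lemma gaussM_cos (t : ℝ) (ht : 0 < t) :
    ∫ x, Real.cos (x * t) ∂gaussM = Real.exp (-t ^ (2:ℝ)) := by
  rw [gaussM_integral, Real.rpow_two]
  calc ∫ x, gaussDen x * Real.cos (x * t)
      = ∫ x, (2 * Real.sqrt π)⁻¹ * (Real.cos (t * x) * Real.exp (-(1/4 : ℝ) * x ^ 2)) := by
        refine integral_congr_ae (ae_of_all _ fun x => ?_)
        show gaussDen x * Real.cos (x * t) = _
        unfold gaussDen; rw [mul_comm x t]; ring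
    _ = (2 * Real.sqrt π)⁻¹ * (2 * Real.sqrt π * Real.exp (-t ^ 2)) := by
        rw [integral_const_mul, integral_cos_gauss]
    _ = Real.exp (-t ^ 2) := by
        rw [← mul_assoc, inv_mul_cancel₀ two_sqrt_pi_pos.ne', one_mul]

/-! ### The absolute moment of the Gaussian measure -/

lemma integrable_comp_abs' {f : ℝ → ℝ} (hf : IntegrableOn (fun x => f |x|) (Ioi (0:ℝ))) :
    Integrable (fun x => f |x|) := by
  have int_Iic : IntegrableOn (fun x ↦ f |x|) (Iic 0) := by
    rw [← Measure.map_neg_eq_self (volume : Measure ℝ)]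
    have m : MeasurableEmbedding fun x : ℝ => -x := (Homeomorph.neg ℝ).measurableEmbedding
    rw [m.integrableOn_map_iff]
    simp_rw [Function.comp_def, abs_neg, neg_preimage, neg_Iic, neg_zero]
    exact Iff.mpr integrableOn_Ici_iff_integrableOn_Ioi hf
  rw [← integrableOn_univ, ← Iic_union_Ioi (a := (0:ℝ))]
  exact int_Iic.union hf

lemma gauss_moment_int {β : ℝ} (hβ0 : 0 < β) :
    Integrable (fun x : ℝ => gaussDen x * |x| ^ β) := by
  set F : ℝ → ℝ := fun r => (2 * Real.sqrt π)⁻¹ * (r ^ β * Real.exp (-(1/4 : ℝ) * r ^ 2))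
    with hF
  have habs : ∀ x : ℝ, F |x| = gaussDen x * |x| ^ β := by
    intro x
    rw [hF]
    simp only
    rw [sq_abs]
    unfold gaussDen
    ring
  have h1 : IntegrableOn (fun x => F |x|) (Ioi (0:ℝ)) := by
    refine IntegrableOn.congr_fun
      (f := fun x : ℝ => (2 * Real.sqrt π)⁻¹ * (x ^ β * Real.exp (-(1/4 : ℝ) * x ^ 2)))
      ((integrableOn_rpow_mul_exp_neg_mul_sq (by norm_num : (0:ℝ) < 1/4)
        (by linarith : (-1:ℝ) < β)).const_mul ((2 * Real.sqrt π)⁻¹))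
      (fun x hx => ?_) measurableSet_Ioi
    rw [hF]
    simp only
    rw [abs_of_pos (show (0:ℝ) < x from hx)]
  exact (integrable_comp_abs' h1).congr (ae_of_all _ fun x => habs x)

lemma one_div_four_rpow (β : ℝ) : ((1:ℝ)/4) ^ (-(β + 1)/2) = 2 ^ (β + 1) := by
  have h14 : ((1:ℝ)/4) = (2:ℝ) ^ (-2 : ℝ) := by
    rw [Real.rpow_neg (by norm_num : (0:ℝ) ≤ 2), Real.rpow_two]
    norm_num
  rw [h14, ← Real.rpow_mul (by norm_num : (0:ℝ) ≤ 2)]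
  congr 1
  ring

lemma gauss_moment_value {β : ℝ} (hβ0 : 0 < β) :
    ∫ x : ℝ, gaussDen x * |x| ^ β
      = 2 ^ β * Real.Gamma ((β + 1)/2) / Real.sqrt π := by
  set F : ℝ → ℝ := fun r => (2 * Real.sqrt π)⁻¹ * (r ^ β * Real.exp (-(1/4 : ℝ) * r ^ 2))
    with hF
  have habs : ∀ x : ℝ, F |x| = gaussDen x * |x| ^ β := by
    intro x
    rw [hF]; simp only; rw [sq_abs]; unfold gaussDen; ring
  have hinner : ∫ x in Ioi (0:ℝ), x ^ β * Real.exp (-(1/4 : ℝ) * x ^ 2)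
      = 2 ^ (β + 1) * (1/2) * Real.Gamma ((β + 1)/2) := by
    simp_rw [← Real.rpow_two]
    rw [integral_rpow_mul_exp_neg_mul_rpow (by norm_num : (0:ℝ) < 2)
      (by linarith : (-1:ℝ) < β) (by norm_num : (0:ℝ) < 1/4)]
    rw [one_div_four_rpow]
  calc ∫ x : ℝ, gaussDen x * |x| ^ β = ∫ x : ℝ, F |x| := by
        exact integral_congr_ae (ae_of_all _ fun x => (habs x).symm)
    _ = 2 * ∫ x in Ioi (0:ℝ), F x := integral_comp_abs
    _ = 2 * ((2 * Real.sqrt π)⁻¹ * (2 ^ (β + 1) * (1/2) * Real.Gamma ((β + 1)/2))) := by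
        rw [hF, integral_const_mul, hinner]
    _ = 2 ^ β * Real.Gamma ((β + 1)/2) / Real.sqrt π := by
        have h2 : (2:ℝ) ^ (β + 1) = 2 ^ β * 2 := Real.rpow_add_one (by norm_num) β
        have hs : Real.sqrt π ≠ 0 := ne_of_gt (Real.sqrt_pos.mpr Real.pi_pos)
        rw [h2]
        field_simp

lemma gaussM_lmoment {β : ℝ} (hβ0 : 0 < β) :
    ∫⁻ x, ENNReal.ofReal (|x| ^ β) ∂gaussM
      = ENNReal.ofReal (2 ^ β * Real.Gamma ((β + 1)/2) / Real.sqrt π) := by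
  rw [gaussM, lintegral_withDensity_eq_lintegral_mul _ gaussDen_meas.ennreal_ofReal
    (by fun_prop)]
  calc ∫⁻ x, (ENNReal.ofReal (gaussDen x) * ENNReal.ofReal (|x| ^ β))
      = ∫⁻ x, ENNReal.ofReal (gaussDen x * |x| ^ β) := by
        refine lintegral_congr fun x => ?_
        rw [ENNReal.ofReal_mul (gaussDen_nonneg x)]
    _ = ENNReal.ofReal (∫ x, gaussDen x * |x| ^ β) := by
        rw [ofReal_integral_eq_lintegral_ofReal (gauss_moment_int hβ0)
          (ae_of_all _ fun x => mul_nonneg (gaussDen_nonneg x)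
            (Real.rpow_nonneg (abs_nonneg x) β))]
    _ = ENNReal.ofReal (2 ^ β * Real.Gamma ((β + 1)/2) / Real.sqrt π) := by
        rw [gauss_moment_value hβ0]

end SymmStableAux

open SymmStableAux

/-- Corollary 3: absolute moments of the symmetric strictly stable law. If `μ`
is the probability measure on `ℝ` with characteristic function `e^{−|t|^α}`,
`α ∈ (0,2)`, then for `0 < β < α`,
`∫ |x|^β dμ(x) = (2^β/√π) Γ((β+1)/2) Γ(1 − β/α)/Γ(1 − β/2)`. -/
theorem symmStable_absolute_moments
    (α : ℝ) (hα0 : 0 < α) (hα2 : α < 2)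
    (μ : Measure ℝ) [IsProbabilityMeasure μ]
    (hμ : ∀ t : ℝ,
      ∫ x, Complex.exp (Complex.I * t * x) ∂μ = ↑(Real.exp (-|t| ^ α)))
    (β : ℝ) (hβ0 : 0 < β) (hβα : β < α) :
    ∫ x, |x| ^ β ∂μ
      = (2 ^ β / Real.sqrt Real.pi) * Real.Gamma ((β + 1) / 2)
          * Real.Gamma (1 - β / α) / Real.Gamma (1 - β / 2) := by
  have hβ2 : β < 2 := lt_trans hβα hα2
  set C : ℝ := ∫ t in Ioi (0:ℝ), (1 - Real.cos t) * t ^ (-1 - β) with hC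
  have hCnn : 0 ≤ C := by
    refine setIntegral_nonneg measurableSet_Ioi fun t ht => ?_
    exact mul_nonneg (one_sub_cos_nonneg t) (Real.rpow_nonneg (le_of_lt ht) _)
  set G : ℝ := 2 ^ β * Real.Gamma ((β + 1)/2) / Real.sqrt π with hGdef
  have hGpos : 0 < G := by
    have h1 : (0:ℝ) < 2 ^ β := Real.rpow_pos_of_pos two_pos β
    have h2 := Real.Gamma_pos_of_pos (show (0:ℝ) < (β + 1)/2 by linarith)
    have h3 := Real.sqrt_pos.mpr Real.pi_pos
    positivity
  have hΓ2pos : 0 < Real.Gamma (1 - β / 2) :=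
    Real.Gamma_pos_of_pos (by nlinarith)
  have hΓαpos : 0 < Real.Gamma (1 - β / α) := by
    refine Real.Gamma_pos_of_pos ?_
    have : β / α < 1 := (div_lt_one hα0).mpr hβα
    linarith
  -- Gaussian identity: G * C = Γ(1 - β/2)/β
  have hgauss : G * C = Real.Gamma (1 - β / 2) / β := by
    have h := lintegral_moment hβ0 hβ2 gaussM (fun t => Real.exp (-t ^ (2:ℝ))) gaussM_cos
    rw [gaussM_lmoment hβ0, ← hGdef, ← hC] at h
    rw [← ENNReal.ofReal_mul hGpos.le] at h
    have hrhs : ∫⁻ t in Ioi (0:ℝ), ENNReal.ofReal ((1 - Real.exp (-t ^ (2:ℝ))) * t ^ (-1 - β))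
        = ENNReal.ofReal (Real.Gamma (1 - β / 2) / β) := by
      rw [← ofReal_integral_eq_lintegral_ofReal (integrableOn_one_sub_exp hβ0 two_pos hβ2) ?_,
        integral_one_sub_exp hβ0 two_pos hβ2]
      filter_upwards [ae_restrict_mem measurableSet_Ioi] with t ht
      exact mul_nonneg (one_sub_exp_neg_nonneg (Real.rpow_nonneg (le_of_lt ht) _))
        (Real.rpow_nonneg (le_of_lt ht) _)
    rw [hrhs] at h
    exact (ENNReal.ofReal_eq_ofReal_iff (mul_nonneg hGpos.le hCnn)
      (div_nonneg hΓ2pos.le hβ0.le)).mp h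
  have hCpos : 0 < C := by
    rcases hCnn.lt_or_eq with h | h
    · exact h
    · exfalso
      have : G * C = 0 := by rw [← h, mul_zero]
      rw [hgauss] at this
      have := div_pos hΓ2pos hβ0
      linarith
  -- the cosine transform of μ
  have hμcos : ∀ t : ℝ, 0 < t → ∫ x, Real.cos (x * t) ∂μ = Real.exp (-t ^ α) := by
    intro t ht
    have hint : Integrable (fun x : ℝ => Complex.exp (Complex.I * t * x)) μ := by
      refine Integrable.mono' (integrable_const 1)
        (Measurable.aestronglyMeasurable (by fun_prop)) (ae_of_all _ fun x => ?_)
      have h1 : Complex.I * (t:ℂ) * (x:ℂ) = ((t * x : ℝ) : ℂ) * Complex.I := by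
        push_cast; ring
      rw [h1, Complex.norm_exp]
      simp [Complex.mul_re]
    have h := congrArg Complex.re (hμ t)
    have hre2 := integral_re hint
    simp only [RCLike.re_to_complex] at hre2
    rw [← hre2] at h
    rw [Complex.ofReal_re] at h
    have : ∫ x, (Complex.exp (Complex.I * t * x)).re ∂μ = ∫ x, Real.cos (x * t) ∂μ := by
      refine integral_congr_ae (ae_of_all _ fun x => ?_)
      show (Complex.exp (Complex.I * t * x)).re = Real.cos (x * t)
      have h1 : Complex.I * (t:ℂ) * (x:ℂ) = ((t * x : ℝ) : ℂ) * Complex.I := by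
        push_cast; ring
      rw [h1, Complex.exp_ofReal_mul_I_re, mul_comm]
    rw [this] at h
    rw [h, abs_of_pos ht]
  -- stable identity: M * C = Γ(1 - β/α)/β
  have hμeq := lintegral_moment hβ0 hβ2 μ (fun t => Real.exp (-t ^ α)) hμcos
  rw [← hC] at hμeq
  have hrhsα : ∫⁻ t in Ioi (0:ℝ), ENNReal.ofReal ((1 - Real.exp (-t ^ α)) * t ^ (-1 - β))
      = ENNReal.ofReal (Real.Gamma (1 - β / α) / β) := by
    rw [← ofReal_integral_eq_lintegral_ofReal (integrableOn_one_sub_exp hβ0 hα0 hβα) ?_,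
      integral_one_sub_exp hβ0 hα0 hβα]
    filter_upwards [ae_restrict_mem measurableSet_Ioi] with t ht
    exact mul_nonneg (one_sub_exp_neg_nonneg (Real.rpow_nonneg (le_of_lt ht) _))
      (Real.rpow_nonneg (le_of_lt ht) _)
  rw [hrhsα] at hμeq
  -- finiteness of the moment
  have hCne : ENNReal.ofReal C ≠ 0 := by
    rw [Ne, ENNReal.ofReal_eq_zero]
    linarith
  have hLne : (∫⁻ x, ENNReal.ofReal (|x| ^ β) ∂μ) ≠ ⊤ := by
    intro htop
    rw [htop, ENNReal.top_mul hCne] at hμeq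
    exact ENNReal.ofReal_ne_top hμeq.symm
  have hintμ : Integrable (fun x : ℝ => |x| ^ β) μ := by
    constructor
    · exact Measurable.aestronglyMeasurable (by fun_prop)
    · rw [hasFiniteIntegral_iff_ofReal (ae_of_all _ fun x =>
        Real.rpow_nonneg (abs_nonneg x) β)]
      exact lt_top_iff_ne_top.mpr hLne
  have hMre : ENNReal.ofReal (∫ x, |x| ^ β ∂μ) = ∫⁻ x, ENNReal.ofReal (|x| ^ β) ∂μ :=
    ofReal_integral_eq_lintegral_ofReal hintμ
      (ae_of_all _ fun x => Real.rpow_nonneg (abs_nonneg x) β)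
  set M : ℝ := ∫ x, |x| ^ β ∂μ with hMdef
  have hMnn : 0 ≤ M :=
    integral_nonneg fun x => Real.rpow_nonneg (abs_nonneg x) β
  have hstable : M * C = Real.Gamma (1 - β / α) / β := by
    rw [← hMre, ← ENNReal.ofReal_mul hMnn] at hμeq
    exact (ENNReal.ofReal_eq_ofReal_iff (mul_nonneg hMnn hCnn)
      (div_nonneg hΓαpos.le hβ0.le)).mp hμeq
  -- final algebra
  have hfinal : M = G * Real.Gamma (1 - β / α) / Real.Gamma (1 - β / 2) := by
    have e : (Real.Gamma (1 - β / α) / β) * G = (Real.Gamma (1 - β / 2) / β) * M := by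
      rw [← hstable, ← hgauss]; ring
    rw [div_mul_eq_mul_div, div_mul_eq_mul_div, div_eq_div_iff hβ0.ne' hβ0.ne'] at e
    rw [eq_div_iff hΓ2pos.ne']
    nlinarith [e]
  rw [hfinal, hGdef]
  ring
end
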